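/- Let α ∈ (1,2), b > 0 and x ∈ ℝ. Then the improper integral lim_{T→∞} ∫_0^T cos(b(x+y))·y^{1−α} dy exists and equals (Γ(2−α)/b^{2−α})·( cos(bx)·cos(π(2−α)/2) − sin(bx)·sin(π(2−α)/2) ). -/

import Mathlib

open Filter Topology intervalIntegral

namespace Frac14

open MeasureTheory Set Complex

noncomputable def kerC (s : ℝ) (z : ℂ) (y : ℝ) : ℂ :=
  (y : ℂ) ^ ((s : ℂ) - 1) * Complex.exp (-(z * y))

lemma ker_norm {s : ℝ} (z : ℂ) {y : ℝ} (hy : 0 < y) :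
    ‖kerC s z y‖ = y ^ (s - 1) * Real.exp (-(z.re * y)) := by
  rw [kerC, norm_mul, Complex.norm_exp,
    Complex.norm_cpow_eq_rpow_re_of_pos hy]
  simp [Complex.sub_re]

lemma ker_continuousOn (s : ℝ) (z : ℂ) : ContinuousOn (kerC s z) {y : ℝ | y ≠ 0} := by
  intro y hy
  apply ContinuousAt.continuousWithinAt
  exact (continuousAt_ofReal_cpow_const y _ (Or.inr hy)).mul
    (((Complex.continuous_ofReal.continuousAt.const_mul z).neg).cexp)

lemma ker_integrableOn {s : ℝ} (hs : 0 < s) {z : ℂ} (hz : 0 < z.re) :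
    IntegrableOn (kerC s z) (Ioi 0) := by
  have hmeas : AEStronglyMeasurable (kerC s z) (volume.restrict (Ioi 0)) :=
    ((ker_continuousOn s z).mono (fun y hy => ne_of_gt hy)).aestronglyMeasurable
      measurableSet_Ioi
  have hint : IntegrableOn (fun y : ℝ => y ^ (s - 1) * Real.exp (-z.re * y)) (Ioi 0) := by
    have := integrableOn_rpow_mul_exp_neg_mul_rpow (p := 1) (s := s - 1) (b := z.re)
      (by linarith) one_pos hz
    simpa [Real.rpow_one] using this
  refine Integrable.mono' hint hmeas ?_
  filter_upwards [ae_restrict_mem measurableSet_Ioi] with y hy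
  rw [ker_norm z hy]
  simp [neg_mul]


noncomputable def FF (s : ℝ) (z : ℂ) : ℂ := ∫ y : ℝ in Ioi 0, kerC s z y


lemma FF_differentiableAt {s : ℝ} (hs : 0 < s) {z : ℂ} (hz : 0 < z.re) :
    DifferentiableAt ℂ (FF s) z := by
  set F' : ℂ → ℝ → ℂ := fun w y => (y : ℂ) ^ ((s : ℂ) - 1) * (Complex.exp (-(w * y)) * -(y : ℂ))
  have hball : ∀ w ∈ Metric.ball z (z.re / 2), z.re / 2 < w.re := by
    intro w hw
    have h1 : |(w - z).re| ≤ ‖w - z‖ := Complex.abs_re_le_norm _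
    rw [Metric.mem_ball, Complex.dist_eq] at hw
    have h2 := abs_lt.mp (h1.trans_lt hw) |>.1
    simp only [Complex.sub_re] at h2
    linarith
  have key := hasDerivAt_integral_of_dominated_loc_of_deriv_le
    (F := fun w y => kerC s w y) (F' := F') (x₀ := z)
    (bound := fun y : ℝ => y ^ s * Real.exp (-(z.re / 2) * y))
    (μ := volume.restrict (Ioi 0)) (Metric.ball_mem_nhds z (half_pos hz))
    ?_ (ker_integrableOn hs hz) ?_ ?_ ?_ ?_
  · exact key.2.differentiableAt
  · filter_upwards [] with w
    exact (((ker_continuousOn s w).mono (fun y (hy : y ∈ Ioi 0) => ne_of_gt hy)).aestronglyMeasurable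
      measurableSet_Ioi)
  · -- AEStronglyMeasurable (F' z)
    have : ContinuousOn (F' z) {y : ℝ | y ≠ 0} := by
      intro y hy
      exact ContinuousAt.continuousWithinAt <|
        (continuousAt_ofReal_cpow_const y _ (Or.inr hy)).mul
          ((((Complex.continuous_ofReal.continuousAt.const_mul z).neg).cexp).mul
            Complex.continuous_ofReal.continuousAt.neg)
    exact (this.mono (fun y (hy : y ∈ Ioi 0) => ne_of_gt hy)).aestronglyMeasurable
      measurableSet_Ioi
  · -- bound
    filter_upwards [ae_restrict_mem measurableSet_Ioi] with y hy w hw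
    have hy' : (0:ℝ) < y := hy
    have : ‖F' w y‖ = y ^ (s - 1) * (Real.exp (-(w.re * y)) * y) := by
      simp only [F', norm_mul, norm_neg, Complex.norm_exp,
        Complex.norm_cpow_eq_rpow_re_of_pos hy', Complex.norm_real, Real.norm_eq_abs, abs_of_pos hy']
      simp [Complex.sub_re]
    rw [this]
    have h1 : y ^ (s - 1) * (Real.exp (-(w.re * y)) * y) = y ^ s * Real.exp (-(w.re * y)) := by
      rw [show s = (s - 1) + 1 by ring, Real.rpow_add hy', Real.rpow_one]; ring
    rw [h1]
    have h2 : Real.exp (-(w.re * y)) ≤ Real.exp (-(z.re / 2) * y) := by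
      apply Real.exp_le_exp.mpr
      have := hball w hw
      nlinarith
    have h3 : (0:ℝ) ≤ y ^ s := Real.rpow_nonneg hy'.le _
    nlinarith [Real.exp_pos (-(w.re * y))]
  · -- bound integrable
    have := integrableOn_rpow_mul_exp_neg_mul_rpow (p := 1) (s := s) (b := z.re / 2)
      (by linarith) one_pos (half_pos hz)
    simpa [Real.rpow_one, IntegrableOn] using this
  · -- h_diff
    filter_upwards [ae_restrict_mem measurableSet_Ioi] with y hy w hw
    have : HasDerivAt (fun w : ℂ => Complex.exp (-(w * y))) (Complex.exp (-(w * y)) * -(y:ℂ)) w := by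
      have h1 : HasDerivAt (fun w : ℂ => -(w * y)) (-(y:ℂ)) w := by
        exact (hasDerivAt_mul_const (y:ℂ)).neg
      simpa using h1.cexp
    simpa [kerC, F'] using this.const_mul ((y : ℂ) ^ ((s : ℂ) - 1))


lemma FF_eq {s : ℝ} (hs : 0 < s) {z : ℂ} (hz : 0 < z.re) :
    FF s z = Complex.Gamma s * z ^ (-(s : ℂ)) := by
  set U : Set ℂ := {w : ℂ | 0 < w.re} with hU
  have hUopen : IsOpen U := isOpen_lt continuous_const Complex.continuous_re
  have hUconn : IsPreconnected U := (convex_halfSpace_re_gt 0).isPreconnected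
  have hFan : AnalyticOnNhd ℂ (FF s) U := by
    apply DifferentiableOn.analyticOnNhd _ hUopen
    exact fun w hw => (FF_differentiableAt hs hw).differentiableWithinAt
  have hGan : AnalyticOnNhd ℂ (fun w : ℂ => Complex.Gamma s * w ^ (-(s:ℂ))) U := by
    apply DifferentiableOn.analyticOnNhd _ hUopen
    intro w hw
    apply DifferentiableAt.differentiableWithinAt
    exact (differentiableAt_id.cpow (differentiableAt_const _) (Or.inl hw)).const_mul _
  have hreal : ∀ r : ℝ, 0 < r → FF s (r : ℂ) = Complex.Gamma s * (r:ℂ) ^ (-(s:ℂ)) := by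
    intro r hr
    have h0 := integral_cpow_mul_exp_neg_mul_Ioi (a := (s:ℂ))
      (by simpa using hs) hr
    have harg : Complex.arg (r : ℂ) ≠ Real.pi := by
      rw [Complex.arg_ofReal_of_nonneg hr.le]
      exact Real.pi_ne_zero.symm
    have : ((1 : ℂ) / r) ^ (s : ℂ) = (r : ℂ) ^ (-(s:ℂ)) := by
      rw [one_div, inv_cpow _ _ harg, ← cpow_neg]
    rw [FF]
    simp only [Frac14.kerC]
    rw [h0, this, mul_comm]
  have hfreq : ∃ᶠ w in 𝓝[≠] (1 : ℂ), FF s w = Complex.Gamma s * w ^ (-(s:ℂ)) := by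
    set u : ℕ → ℝ := fun n => 1 + ((n:ℝ)+1)⁻¹ with hu
    have hupos : ∀ n, 0 < u n := fun n => by positivity
    have hune : ∀ n, u n ≠ 1 := by
      intro n h
      have : ((n:ℝ)+1)⁻¹ = 0 := by simpa [hu] using h
      exact absurd this (by positivity)
    have htend : Tendsto (fun n : ℕ => ((u n : ℝ) : ℂ)) atTop (𝓝[≠] (1:ℂ)) := by
      rw [tendsto_nhdsWithin_iff]
      constructor
      · have h0 : Tendsto u atTop (𝓝 1) := by
          have : Tendsto (fun n : ℕ => ((n:ℝ)+1)⁻¹) atTop (𝓝 0) :=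
            tendsto_one_div_add_atTop_nhds_zero_nat.congr (fun n => by rw [one_div])
          simpa using this.const_add 1
        have := (Complex.continuous_ofReal.tendsto 1).comp h0
        simpa [Function.comp_def] using this
      · filter_upwards [] with n
        simp only [mem_compl_iff, mem_singleton_iff]
        rw [show (1:ℂ) = ((1:ℝ):ℂ) by norm_num, Complex.ofReal_inj]
        exact hune n
    apply htend.frequently
    apply Filter.Eventually.frequently
    filter_upwards [] with n
    exact hreal (u n) (hupos n)
  have := AnalyticOnNhd.eqOn_of_preconnected_of_frequently_eq hFan hGan hUconn
    (show (1:ℂ) ∈ U from by simp [hU]) hfreq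
  exact this hz


lemma zz_ne {ε b : ℝ} (hb : 0 < b) : ((ε : ℂ) - Complex.I * b) ≠ 0 := by
  intro h
  have := congrArg Complex.im h
  simp at this
  linarith

lemma zz_abs {ε b : ℝ} (hb : 0 < b) : b ≤ ‖(ε : ℂ) - Complex.I * b‖ := by
  have h := Complex.abs_im_le_norm ((ε : ℂ) - Complex.I * b)
  have him : ((ε : ℂ) - Complex.I * b).im = -b := by simp
  rw [him] at h
  rwa [abs_of_nonpos (by linarith), neg_neg] at h

lemma zz_re (ε b : ℝ) : ((ε : ℂ) - Complex.I * b).re = ε := by simp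

lemma exp_norm (z : ℂ) (y : ℝ) : ‖Complex.exp (-(z * y))‖ = Real.exp (-(z.re * y)) := by
  rw [Complex.norm_exp]
  simp

lemma ibp_bound {s b : ℝ} (hs0 : 0 < s) (hs1 : s < 1) (hb : 0 < b) {ε A T : ℝ}
    (hε : 0 ≤ ε) (hA : 1 ≤ A) (hT : A ≤ T) :
    ‖∫ y in A..T, kerC s ((ε : ℂ) - Complex.I * b) y‖ ≤ 3 * A ^ (s - 1) / b := by
  set z : ℂ := (ε : ℂ) - Complex.I * b with hz
  have hzne : z ≠ 0 := zz_ne hb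
  have hzabs : b ≤ ‖z‖ := zz_abs hb
  have hA0 : (0:ℝ) < A := lt_of_lt_of_le one_pos hA
  have huIcc : uIcc A T = Icc A T := uIcc_of_le hT
  have hpos : ∀ y ∈ uIcc A T, (0:ℝ) < y := by
    rw [huIcc]; intro y hy; exact lt_of_lt_of_le hA0 hy.1
  set u : ℝ → ℂ := fun y => ((y ^ (s - 1) : ℝ) : ℂ) with hu
  set u' : ℝ → ℂ := fun y => (((s - 1) * y ^ (s - 2) : ℝ) : ℂ) with hu'
  set v : ℝ → ℂ := fun y => Complex.exp (-(z * y)) * (-z)⁻¹ with hv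
  set v' : ℝ → ℂ := fun y => Complex.exp (-(z * y)) with hv'
  have hud : ∀ y ∈ uIcc A T, HasDerivAt u (u' y) y := by
    intro y hy
    have h0 := Real.hasDerivAt_rpow_const (p := s - 1) (Or.inl (hpos y hy).ne')
    have := h0.ofReal_comp
    simpa [hu, hu', show s - 1 - 1 = s - 2 by ring] using this
  have hvd : ∀ y ∈ uIcc A T, HasDerivAt v (v' y) y := by
    intro y hy
    have h1 : HasDerivAt (fun y : ℝ => z * y) z y := by
      simpa using (Complex.ofRealCLM.hasDerivAt (x := y)).const_mul z
    have h2 := (h1.neg).cexp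
    have h3 := h2.mul_const (-z)⁻¹
    have : Complex.exp (-(z * y)) * -z * (-z)⁻¹ = v' y := by
      rw [mul_assoc, mul_inv_cancel₀ (neg_ne_zero.mpr hzne), mul_one]
    simp only [Pi.neg_apply] at h3
    rwa [this] at h3
  have hu'int : IntervalIntegrable u' volume A T := by
    apply ContinuousOn.intervalIntegrable
    apply Complex.continuous_ofReal.comp_continuousOn
    exact continuousOn_const.mul (continuousOn_id.rpow_const
      (fun y hy => Or.inl (hpos y hy).ne'))
  have hv'int : IntervalIntegrable v' volume A T :=
    (Continuous.intervalIntegrable (by continuity) A T)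
  have heq : EqOn (kerC s z) (fun y => u y * v' y) (uIcc A T) := by
    intro y hy
    have hy0 := hpos y hy
    simp only [kerC, hu, hv']
    rw [Complex.ofReal_cpow hy0.le]
    push_cast
    ring
  rw [intervalIntegral.integral_congr heq,
    intervalIntegral.integral_mul_deriv_eq_deriv_mul hud hvd hu'int hv'int]
  -- norm bounds
  have hvbound : ∀ y : ℝ, 0 ≤ y → ‖v y‖ ≤ 1 / b := by
    intro y hy
    rw [hv, norm_mul, exp_norm, norm_inv, norm_neg, zz_re]
    have h1 : Real.exp (-(ε * y)) ≤ 1 := Real.exp_le_one_iff.mpr (by nlinarith)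
    have h2 : (‖z‖)⁻¹ ≤ 1 / b := by
      rw [one_div]
      exact inv_anti₀ hb hzabs
    have h3 : (0:ℝ) < ‖z‖ := norm_pos_iff.mpr hzne
    calc Real.exp (-(ε * y)) * ‖z‖⁻¹ ≤ 1 * (1/b) := by
          apply mul_le_mul h1 h2 (by positivity) one_pos.le
      _ = 1 / b := one_mul _
  have hux : ∀ y : ℝ, 0 ≤ y → ‖u y‖ = y ^ (s - 1) := by
    intro y hy
    rw [hu, Complex.norm_real, Real.norm_eq_abs]
    exact _root_.abs_of_nonneg (Real.rpow_nonneg hy _)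
  have hmono : ∀ y : ℝ, A ≤ y → y ^ (s - 1) ≤ A ^ (s - 1) := fun y hy =>
    Real.rpow_le_rpow_of_nonpos hA0 hy (by linarith)
  have hbT : ‖u T * v T‖ ≤ A ^ (s - 1) / b := by
    rw [norm_mul, hux T (by linarith)]
    calc T ^ (s - 1) * ‖v T‖ ≤ A ^ (s - 1) * (1/b) :=
          mul_le_mul (hmono T hT) (hvbound T (by linarith)) (norm_nonneg _)
            (Real.rpow_nonneg hA0.le _)
      _ = A ^ (s - 1) / b := by ring
  have hbA : ‖u A * v A‖ ≤ A ^ (s - 1) / b := by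
    rw [norm_mul, hux A hA0.le]
    calc A ^ (s - 1) * ‖v A‖ ≤ A ^ (s - 1) * (1/b) :=
          mul_le_mul_of_nonneg_left (hvbound A hA0.le) (Real.rpow_nonneg hA0.le _)
      _ = A ^ (s - 1) / b := by ring
  have hbI : ‖∫ y in A..T, u' y * v y‖ ≤ A ^ (s - 1) / b := by
    have hgint : IntervalIntegrable (fun y : ℝ => (1 - s) * y ^ (s - 2) * (1/b)) volume A T :=
      ContinuousOn.intervalIntegrable
        ((continuousOn_const.mul (continuousOn_id.rpow_const
          (fun y hy => Or.inl (hpos y hy).ne'))).mul continuousOn_const)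
    have hptwise : ∀ᵐ y ∂(volume.restrict (Set.uIoc A T)),
        ‖u' y * v y‖ ≤ (1 - s) * y ^ (s - 2) * (1/b) := by
      filter_upwards [ae_restrict_mem measurableSet_uIoc] with y hy
      rw [Set.uIoc_of_le hT] at hy
      have hy0 : (0:ℝ) < y := lt_trans hA0 hy.1
      rw [norm_mul]
      have h1 : ‖u' y‖ = (1 - s) * y ^ (s - 2) := by
        rw [hu', Complex.norm_real, Real.norm_eq_abs, abs_mul,
          _root_.abs_of_nonpos (by linarith : s - 1 ≤ 0),
          _root_.abs_of_nonneg (Real.rpow_nonneg hy0.le _)]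
        ring
      rw [h1]
      exact mul_le_mul_of_nonneg_left (hvbound y hy0.le)
        (mul_nonneg (by linarith) (Real.rpow_nonneg hy0.le _))
    have hle := intervalIntegral.norm_integral_le_of_norm_le hT
      (((ae_restrict_iff' measurableSet_uIoc).mp hptwise).mono fun t ht hmem =>
        ht (by rw [Set.uIoc_of_le hT]; exact hmem)) hgint
    refine hle.trans ?_
    have hcalc : (∫ y in A..T, (1 - s) * y ^ (s - 2) * (1/b))
        = (A ^ (s - 1) - T ^ (s - 1)) / b := by
      have h1 : (∫ y in A..T, (1 - s) * y ^ (s - 2) * (1/b))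
          = (1 - s) * (1/b) * ∫ y in A..T, y ^ (s - 2) := by
        rw [← intervalIntegral.integral_const_mul]
        congr 1; ext y; ring
      rw [h1, integral_rpow (Or.inr ⟨by intro h; nlinarith [h],
        by rw [huIcc]; intro h; exact absurd h.1 (by linarith)⟩),
        show s - 2 + 1 = s - 1 by ring]
      field_simp [sub_ne_zero.mpr (show s ≠ 1 from by linarith)]
      ring
    rw [hcalc]
    have hTA : T ^ (s - 1) ≤ A ^ (s - 1) := hmono T hT
    have hT0 : (0:ℝ) ≤ T ^ (s - 1) := Real.rpow_nonneg (by linarith) _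
    gcongr
    linarith
  calc ‖u T * v T - u A * v A - ∫ y in A..T, u' y * v y‖
      ≤ ‖u T * v T - u A * v A‖ + ‖∫ y in A..T, u' y * v y‖ := norm_sub_le _ _
    _ ≤ ‖u T * v T‖ + ‖u A * v A‖ + ‖∫ y in A..T, u' y * v y‖ := by
        have := norm_sub_le (u T * v T) (u A * v A); linarith
    _ ≤ A ^ (s - 1) / b + A ^ (s - 1) / b + A ^ (s - 1) / b := by linarith
    _ = 3 * A ^ (s - 1) / b := by ring

lemma ker_intervalIntegrable {s : ℝ} (hs0 : 0 < s) (z : ℂ) (hz : 0 ≤ z.re)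
    {a T : ℝ} (ha : 0 ≤ a) (hT : a ≤ T) : IntervalIntegrable (kerC s z) volume a T := by
  rw [intervalIntegrable_iff_integrableOn_Ioc_of_le hT]
  have hmeas : AEStronglyMeasurable (kerC s z) (volume.restrict (Ioc a T)) :=
    ((ker_continuousOn s z).mono (fun y hy => ne_of_gt (lt_of_le_of_lt ha hy.1))).aestronglyMeasurable
      measurableSet_Ioc
  have hdom : IntegrableOn (fun y : ℝ => y ^ (s - 1)) (Ioc a T) := by
    have h1 : IntervalIntegrable (fun y : ℝ => y ^ (s - 1)) volume a T :=
      intervalIntegral.intervalIntegrable_rpow' (by linarith)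
    rwa [intervalIntegrable_iff_integrableOn_Ioc_of_le hT] at h1
  refine Integrable.mono' hdom hmeas ?_
  filter_upwards [ae_restrict_mem measurableSet_Ioc] with y hy
  have hy0 : (0:ℝ) < y := lt_of_le_of_lt ha hy.1
  rw [ker_norm z hy0]
  have : Real.exp (-(z.re * y)) ≤ 1 := Real.exp_le_one_iff.mpr (by nlinarith)
  nlinarith [Real.rpow_nonneg hy0.le (s - 1), Real.exp_pos (-(z.re * y))]

lemma tail_bound {s b : ℝ} (hs0 : 0 < s) (hs1 : s < 1) (hb : 0 < b) {ε A : ℝ}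
    (hε : 0 < ε) (hA : 1 ≤ A) :
    ‖∫ y in Ioi A, kerC s ((ε : ℂ) - Complex.I * b) y‖ ≤ 3 * A ^ (s - 1) / b := by
  have hA0 : (0:ℝ) < A := lt_of_lt_of_le one_pos hA
  have hre : (0:ℝ) < ((ε : ℂ) - Complex.I * b).re := by rw [zz_re]; exact hε
  have hint : IntegrableOn (kerC s ((ε : ℂ) - Complex.I * b)) (Ioi A) :=
    (ker_integrableOn hs0 hre).mono_set (Ioi_subset_Ioi hA0.le)
  have htend := intervalIntegral_tendsto_integral_Ioi A hint tendsto_id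
  have hnorm := (continuous_norm.tendsto _).comp htend
  refine le_of_tendsto hnorm ?_
  filter_upwards [eventually_ge_atTop A] with T hT
  exact ibp_bound hs0 hs1 hb hε.le hA hT

lemma split_bound {s b : ℝ} (hs0 : 0 < s) (hs1 : s < 1) (hb : 0 < b) {ε A : ℝ}
    (hε : 0 < ε) (hA : 1 ≤ A) :
    ‖(∫ y in (0:ℝ)..A, kerC s ((ε : ℂ) - Complex.I * b) y) -
      Complex.Gamma s * ((ε : ℂ) - Complex.I * b) ^ (-(s:ℂ))‖ ≤ 3 * A ^ (s - 1) / b := by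
  have hA0 : (0:ℝ) < A := lt_of_lt_of_le one_pos hA
  have hre : (0:ℝ) < ((ε : ℂ) - Complex.I * b).re := by rw [zz_re]; exact hε
  have hsplit : Complex.Gamma s * ((ε : ℂ) - Complex.I * b) ^ (-(s:ℂ))
      = (∫ y in (0:ℝ)..A, kerC s ((ε : ℂ) - Complex.I * b) y) +
        ∫ y in Ioi A, kerC s ((ε : ℂ) - Complex.I * b) y := by
    rw [← FF_eq hs0 hre, FF, ← Ioc_union_Ioi_eq_Ioi hA0.le,
      setIntegral_union (Ioc_disjoint_Ioi le_rfl) measurableSet_Ioi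
        ((ker_integrableOn hs0 hre).mono_set Ioc_subset_Ioi_self)
        ((ker_integrableOn hs0 hre).mono_set (Ioi_subset_Ioi hA0.le)),
      intervalIntegral.integral_of_le hA0.le]
  rw [hsplit]
  rw [show (∫ y in (0:ℝ)..A, kerC s ((ε : ℂ) - Complex.I * b) y) -
      ((∫ y in (0:ℝ)..A, kerC s ((ε : ℂ) - Complex.I * b) y) +
        ∫ y in Ioi A, kerC s ((ε : ℂ) - Complex.I * b) y)
      = -∫ y in Ioi A, kerC s ((ε : ℂ) - Complex.I * b) y by ring, norm_neg]
  exact tail_bound hs0 hs1 hb hε hA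


lemma eps_limit_integral {s b : ℝ} (hs0 : 0 < s) (hb : 0 < b) {A : ℝ} (hA : 1 ≤ A) :
    Tendsto (fun ε : ℝ => ∫ y in (0:ℝ)..A, kerC s ((ε : ℂ) - Complex.I * b) y) (𝓝[>] (0:ℝ))
      (𝓝 (∫ y in (0:ℝ)..A, kerC s (((0:ℝ) : ℂ) - Complex.I * b) y)) := by
  have hA0 : (0:ℝ) ≤ A := by linarith
  have hrw : ∀ ε : ℝ, (∫ y in (0:ℝ)..A, kerC s ((ε : ℂ) - Complex.I * b) y)
      = ∫ y in Ioc (0:ℝ) A, kerC s ((ε : ℂ) - Complex.I * b) y := fun ε =>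
    intervalIntegral.integral_of_le hA0
  simp only [hrw]
  apply MeasureTheory.tendsto_integral_filter_of_dominated_convergence
    (fun y : ℝ => y ^ (s - 1))
  · filter_upwards [] with ε
    exact ((ker_continuousOn s _).mono (fun y hy => ne_of_gt hy.1)).aestronglyMeasurable
      measurableSet_Ioc
  · filter_upwards [self_mem_nhdsWithin] with ε (hε : (0:ℝ) < ε)
    filter_upwards [ae_restrict_mem measurableSet_Ioc] with y hy
    rw [ker_norm _ hy.1, zz_re]
    have h1 : Real.exp (-(ε * y)) ≤ 1 := Real.exp_le_one_iff.mpr (by nlinarith [hy.1])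
    nlinarith [Real.rpow_nonneg hy.1.le (s - 1), Real.exp_pos (-(ε * y))]
  · have h1 : IntervalIntegrable (fun y : ℝ => y ^ (s - 1)) volume 0 A :=
      intervalIntegral.intervalIntegrable_rpow' (by linarith)
    rwa [intervalIntegrable_iff_integrableOn_Ioc_of_le hA0] at h1
  · filter_upwards [ae_restrict_mem measurableSet_Ioc] with y hy
    have hcont : Continuous (fun ε : ℝ => kerC s ((ε : ℂ) - Complex.I * b) y) := by
      apply Continuous.mul continuous_const
      apply Complex.continuous_exp.comp
      continuity
    exact (hcont.tendsto 0).mono_left nhdsWithin_le_nhds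

lemma zero_bound {s b : ℝ} (hs0 : 0 < s) (hs1 : s < 1) (hb : 0 < b) {A : ℝ} (hA : 1 ≤ A) :
    ‖(∫ y in (0:ℝ)..A, kerC s (((0:ℝ) : ℂ) - Complex.I * b) y) -
      Complex.Gamma s * (((0:ℝ) : ℂ) - Complex.I * b) ^ (-(s:ℂ))‖ ≤ 3 * A ^ (s - 1) / b := by
  have hslit : (((0:ℝ) : ℂ) - Complex.I * b) ∈ Complex.slitPlane := by
    rw [Complex.mem_slitPlane_iff]
    right
    simp [hb.ne']
  have hcpow : Tendsto (fun ε : ℝ => Complex.Gamma s * ((ε : ℂ) - Complex.I * b) ^ (-(s:ℂ)))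
      (𝓝[>] (0:ℝ)) (𝓝 (Complex.Gamma s * (((0:ℝ) : ℂ) - Complex.I * b) ^ (-(s:ℂ)))) := by
    apply Tendsto.const_mul
    have hc : ContinuousAt (fun w : ℂ => w ^ (-(s:ℂ))) (((0:ℝ) : ℂ) - Complex.I * b) :=
      continuousAt_cpow_const hslit
    have hc2 : Continuous (fun ε : ℝ => (ε : ℂ) - Complex.I * b) := by continuity
    exact (hc.tendsto.comp (hc2.tendsto 0)).mono_left nhdsWithin_le_nhds
  have htend := (eps_limit_integral hs0 hb hA).sub hcpow
  have hnorm := (continuous_norm.tendsto _).comp htend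
  refine le_of_tendsto hnorm ?_
  filter_upwards [self_mem_nhdsWithin] with ε (hε : (0:ℝ) < ε)
  exact split_bound hs0 hs1 hb hε hA

lemma main_complex {s b : ℝ} (hs0 : 0 < s) (hs1 : s < 1) (hb : 0 < b) :
    Tendsto (fun T : ℝ => ∫ y in (0:ℝ)..T, kerC s (((0:ℝ) : ℂ) - Complex.I * b) y) atTop
      (𝓝 (Complex.Gamma s * (((0:ℝ) : ℂ) - Complex.I * b) ^ (-(s:ℂ)))) := by
  have hre : (0:ℝ) ≤ (((0:ℝ) : ℂ) - Complex.I * b).re := by rw [zz_re]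
  have hkey : ∀ A : ℝ, 1 ≤ A → ∀ T : ℝ, A ≤ T →
      ‖(∫ y in (0:ℝ)..T, kerC s (((0:ℝ) : ℂ) - Complex.I * b) y) -
        Complex.Gamma s * (((0:ℝ) : ℂ) - Complex.I * b) ^ (-(s:ℂ))‖ ≤ 6 * A ^ (s - 1) / b := by
    intro A hA T hT
    have hA0 : (0:ℝ) < A := lt_of_lt_of_le one_pos hA
    have h1 : IntervalIntegrable (kerC s (((0:ℝ) : ℂ) - Complex.I * b)) volume 0 A :=
      ker_intervalIntegrable hs0 _ hre le_rfl hA0.le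
    have h2 : IntervalIntegrable (kerC s (((0:ℝ) : ℂ) - Complex.I * b)) volume A T :=
      ker_intervalIntegrable hs0 _ hre hA0.le hT
    rw [← intervalIntegral.integral_add_adjacent_intervals h1 h2]
    have hb1 := zero_bound hs0 hs1 hb hA
    have hb2 := ibp_bound hs0 hs1 hb (le_refl (0:ℝ)) hA hT
    calc ‖((∫ y in (0:ℝ)..A, kerC s (((0:ℝ) : ℂ) - Complex.I * b) y) +
          ∫ y in A..T, kerC s (((0:ℝ) : ℂ) - Complex.I * b) y) -
          Complex.Gamma s * (((0:ℝ) : ℂ) - Complex.I * b) ^ (-(s:ℂ))‖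
        ≤ ‖(∫ y in (0:ℝ)..A, kerC s (((0:ℝ) : ℂ) - Complex.I * b) y) -
            Complex.Gamma s * (((0:ℝ) : ℂ) - Complex.I * b) ^ (-(s:ℂ))‖ +
          ‖∫ y in A..T, kerC s (((0:ℝ) : ℂ) - Complex.I * b) y‖ := by
          rw [show ((∫ y in (0:ℝ)..A, kerC s (((0:ℝ) : ℂ) - Complex.I * b) y) +
            ∫ y in A..T, kerC s (((0:ℝ) : ℂ) - Complex.I * b) y) -
            Complex.Gamma s * (((0:ℝ) : ℂ) - Complex.I * b) ^ (-(s:ℂ))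
            = ((∫ y in (0:ℝ)..A, kerC s (((0:ℝ) : ℂ) - Complex.I * b) y) -
            Complex.Gamma s * (((0:ℝ) : ℂ) - Complex.I * b) ^ (-(s:ℂ))) +
            ∫ y in A..T, kerC s (((0:ℝ) : ℂ) - Complex.I * b) y by ring]
          exact norm_add_le _ _
      _ ≤ 3 * A ^ (s - 1) / b + 3 * A ^ (s - 1) / b := add_le_add hb1 hb2
      _ = 6 * A ^ (s - 1) / b := by ring
  rw [Metric.tendsto_atTop]
  intro δ hδ
  have htend0 : Tendsto (fun A : ℝ => 6 * A ^ (s - 1) / b) atTop (𝓝 0) := by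
    have h1 : Tendsto (fun A : ℝ => A ^ (-(1 - s))) atTop (𝓝 0) :=
      tendsto_rpow_neg_atTop (by linarith)
    have h2 : Tendsto (fun A : ℝ => 6 * A ^ (s - 1) / b) atTop (𝓝 (6 * 0 / b)) := by
      apply Tendsto.div_const
      apply Tendsto.const_mul
      simpa [show -(1 - s) = s - 1 by ring] using h1
    simpa using h2
  have hev := (htend0.eventually (gt_mem_nhds hδ)).and (eventually_ge_atTop (1:ℝ))
  obtain ⟨A, hAδ, hA1⟩ := hev.exists
  refine ⟨A, fun T hT => ?_⟩
  rw [dist_eq_norm]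
  exact lt_of_le_of_lt (hkey A hA1 T hT) hAδ


lemma cpow_value {s b : ℝ} (hb : 0 < b) :
    (((0:ℝ) : ℂ) - Complex.I * b) ^ (-(s:ℂ))
      = ((b ^ (-s) : ℝ) : ℂ) * Complex.exp (Complex.I * (Real.pi * s / 2)) := by
  have hzne : (((0:ℝ) : ℂ) - Complex.I * b) ≠ 0 := zz_ne hb
  have hzeq : (((0:ℝ) : ℂ) - Complex.I * b) = (b : ℂ) * (-Complex.I) := by
    push_cast; ring
  have habs : ‖((0:ℝ) : ℂ) - Complex.I * b‖ = b := by
    rw [hzeq, norm_mul]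
    simp [_root_.abs_of_pos hb]
  have harg : Complex.arg (((0:ℝ) : ℂ) - Complex.I * b) = -(Real.pi / 2) := by
    rw [hzeq, Complex.arg_real_mul _ hb, Complex.arg_neg_I]
  have hlog : Complex.log (((0:ℝ) : ℂ) - Complex.I * b)
      = (Real.log b : ℂ) + (-(Real.pi / 2) : ℝ) * Complex.I := by
    rw [Complex.log, habs, harg]
  rw [Complex.cpow_def_of_ne_zero hzne, hlog]
  rw [show ((Real.log b : ℂ) + (-(Real.pi / 2) : ℝ) * Complex.I) * (-(s:ℂ))
      = ((-s * Real.log b : ℝ) : ℂ) + Complex.I * (Real.pi * s / 2) by push_cast; ring,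
    Complex.exp_add]
  congr 1
  rw [← Complex.ofReal_exp]
  congr 1
  rw [Real.rpow_def_of_pos hb]
  ring_nf

end Frac14

open MeasureTheory Set Complex Frac14

/-- For `α ∈ (1,2)`, `b > 0` and `x ∈ ℝ`, the improper integral
`∫_0^∞ cos(b(x+y)) y^{1-α} dy` exists and equals
`(Γ(2-α)/b^{2-α}) (cos(bx) cos(π(2-α)/2) - sin(bx) sin(π(2-α)/2))`. -/
theorem right_fractional_integral_cos (α b x : ℝ) (hα : α ∈ Set.Ioo (1 : ℝ) 2) (hb : 0 < b) :
    Tendsto (fun T : ℝ => ∫ y in (0 : ℝ)..T, Real.cos (b * (x + y)) * y ^ (1 - α)) atTop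
      (𝓝 (Real.Gamma (2 - α) / b ^ (2 - α) *
        (Real.cos (b * x) * Real.cos (Real.pi * (2 - α) / 2) -
          Real.sin (b * x) * Real.sin (Real.pi * (2 - α) / 2)))) := by
  obtain ⟨hα1, hα2⟩ := hα
  set s : ℝ := 2 - α with hsdef
  have hs0 : 0 < s := by simp [hsdef]; linarith
  have hs1 : s < 1 := by simp [hsdef]; linarith
  set z0 : ℂ := ((0:ℝ) : ℂ) - Complex.I * b with hz0
  have hre : (0:ℝ) ≤ z0.re := by rw [hz0, zz_re]
  -- complex limit, multiplied by exp(I b x) and take real part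
  have h1 : Tendsto (fun T : ℝ => (Complex.exp (Complex.I * (b * x)) *
      ∫ y in (0:ℝ)..T, kerC s z0 y).re) atTop
      (𝓝 ((Complex.exp (Complex.I * (b * x)) *
        (Complex.Gamma s * z0 ^ (-(s:ℂ)))).re)) :=
    (Complex.continuous_re.tendsto _).comp
      ((main_complex hs0 hs1 hb).const_mul (Complex.exp (Complex.I * (b * x))))
  -- identify the limit value
  have hval : (Complex.exp (Complex.I * (b * x)) * (Complex.Gamma s * z0 ^ (-(s:ℂ)))).re
      = Real.Gamma s / b ^ s *
        (Real.cos (b * x) * Real.cos (Real.pi * s / 2) -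
          Real.sin (b * x) * Real.sin (Real.pi * s / 2)) := by
    rw [hz0, cpow_value hb, Complex.Gamma_ofReal]
    have hexp : Complex.exp (Complex.I * (b * x)) * Complex.exp (Complex.I * (Real.pi * s / 2))
        = Complex.exp (((b * x + Real.pi * s / 2 : ℝ) : ℂ) * Complex.I) := by
      rw [← Complex.exp_add]; congr 1; push_cast; ring
    rw [show Complex.exp (Complex.I * (b * x)) * ((Real.Gamma s : ℂ) *
        (((b ^ (-s) : ℝ) : ℂ) * Complex.exp (Complex.I * (Real.pi * s / 2))))
        = ((Real.Gamma s : ℂ) * ((b ^ (-s) : ℝ) : ℂ)) *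
          (Complex.exp (Complex.I * (b * x)) * Complex.exp (Complex.I * (Real.pi * s / 2))) by
      ring, hexp, show ((Real.Gamma s : ℂ) * ((b ^ (-s) : ℝ) : ℂ))
        = ((Real.Gamma s * b ^ (-s) : ℝ) : ℂ) by push_cast; ring]
    rw [Complex.mul_re]
    simp only [Complex.ofReal_re, Complex.ofReal_im, zero_mul, sub_zero,
      Complex.exp_ofReal_mul_I_re]
    rw [Real.cos_add, Real.rpow_neg hb.le, div_eq_mul_inv]
    ring
  rw [← hval]
  apply h1.congr'
  filter_upwards [eventually_ge_atTop (0:ℝ)] with T hT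
  have hker : IntervalIntegrable (kerC s z0) volume 0 T :=
    ker_intervalIntegrable hs0 _ hre le_rfl hT
  have hint2 : IntervalIntegrable (fun y => Complex.exp (Complex.I * (b * x)) * kerC s z0 y)
      volume 0 T := hker.const_mul _
  have heqon : EqOn (fun y : ℝ => Real.cos (b * (x + y)) * y ^ (1 - α))
      (fun y : ℝ => (Complex.exp (Complex.I * (b * x)) * kerC s z0 y).re) (uIcc 0 T) := by
    intro y hy
    rw [uIcc_of_le hT] at hy
    show Real.cos (b * (x + y)) * y ^ (1 - α) = (Complex.exp (Complex.I * (b * x)) * kerC s z0 y).re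
    rcases eq_or_lt_of_le hy.1 with h0 | h0
    · simp only [← h0]
      rw [Real.zero_rpow (by linarith : (1:ℝ) - α ≠ 0), mul_zero]
      have : kerC s z0 0 = 0 := by
        rw [kerC, Complex.ofReal_zero, Complex.zero_cpow, zero_mul]
        intro h
        have : (s:ℂ) = 1 := by linear_combination h
        have : s = (1:ℝ) := by exact_mod_cast this
        linarith
      rw [this, mul_zero, Complex.zero_re]
    · have hker_eq : kerC s z0 y = ((y ^ (s-1) : ℝ) : ℂ) * Complex.exp (Complex.I * (b * y)) := by
        rw [kerC, Complex.ofReal_cpow h0.le]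
        have e1 : ((s - 1 : ℝ) : ℂ) = (s:ℂ) - 1 := by push_cast; ring
        have e2 : -(z0 * y) = Complex.I * (b * y) := by rw [hz0]; push_cast; ring
        rw [e1, e2]
      have hexp2 : Complex.exp (Complex.I * (b * x)) * Complex.exp (Complex.I * (b * y))
          = Complex.exp (((b * (x + y) : ℝ) : ℂ) * Complex.I) := by
        rw [← Complex.exp_add]; congr 1; push_cast; ring
      rw [hker_eq, show Complex.exp (Complex.I * (b * x)) *
          (((y ^ (s-1) : ℝ) : ℂ) * Complex.exp (Complex.I * (b * y)))
          = ((y ^ (s-1) : ℝ) : ℂ) * (Complex.exp (Complex.I * (b * x)) *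
            Complex.exp (Complex.I * (b * y))) from by ring, hexp2]
      rw [Complex.mul_re]
      simp only [Complex.ofReal_re, Complex.ofReal_im, zero_mul, sub_zero,
        Complex.exp_ofReal_mul_I_re]
      rw [show s - 1 = 1 - α from by rw [hsdef]; ring]
      ring
  symm
  calc (∫ y in (0:ℝ)..T, Real.cos (b * (x + y)) * y ^ (1 - α))
      = ∫ y in (0:ℝ)..T, (Complex.exp (Complex.I * (b * x)) * kerC s z0 y).re :=
        intervalIntegral.integral_congr heqon
    _ = (∫ y in (0:ℝ)..T, Complex.exp (Complex.I * (b * x)) * kerC s z0 y).re := by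
        have := Complex.reCLM.intervalIntegral_comp_comm hint2
        simpa using this
    _ = (Complex.exp (Complex.I * (b * x)) * ∫ y in (0:ℝ)..T, kerC s z0 y).re := by
        rw [intervalIntegral.integral_const_mul]
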